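/- For any off-branch set A ⊆ ω^{<ω}, the set D_A = {σ ∈ ω^{<ω} : for all τ ∈ ω^{<ω}, rs(σ⌢τ) ∉ A} is dense open in the partial order ω^{<ω} ordered by reverse extension (p ≤ q iff q is an initial segment of p). -/

import Mathlib

/-- A branch of the tree `ω^{<ω}`: a maximal chain in the initial-segment order. -/
def IsBranch (b : Set (List ℕ)) : Prop := IsMaxChain (· <+: ·) b

/-- A set of nodes of `ω^{<ω}` is off-branch if it meets every branch finitely. -/
def OffBranch (A : Set (List ℕ)) : Prop := ∀ b, IsBranch b → (A ∩ b).Finite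

/-- The right-shift `rs⟨n₀,…,n_k⟩ = ⟨n₀,…,n_k + 1⟩`, incrementing the last entry. -/
def rs (σ : List ℕ) : List ℕ := σ.dropLast ++ [σ.getLastD 0 + 1]

lemma prefix_rs_append (π l : List ℕ) (hl : l ≠ []) : π <+: rs (π ++ l) := by
  unfold rs
  rw [List.dropLast_append_of_ne_nil hl, List.append_assoc]
  exact List.prefix_append _ _

lemma length_rs (ρ : List ℕ) (h : ρ ≠ []) : (rs ρ).length = ρ.length := by
  unfold rs
  simp [List.length_dropLast, Nat.sub_add_cancel (List.length_pos_iff.2 h)]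


/-- For an off-branch set `A`, the set `D_A = {σ : ∀ τ, rs(σ⌢τ) ∉ A}` is dense
and open in Cohen forcing, i.e. in `ω^{<ω}` ordered by reverse end-extension
(`p ≤ q` iff `q` is an initial segment of `p`): every condition has an extension
in `D_A`, and `D_A` is closed under extension. -/
theorem DA_dense_open (A : Set (List ℕ)) (hA : OffBranch A) :
    (∀ σ : List ℕ, ∃ τ : List ℕ, σ <+: τ ∧ τ ∈ {σ | ∀ τ', rs (σ ++ τ') ∉ A}) ∧
    (∀ σ ∈ {σ : List ℕ | ∀ τ', rs (σ ++ τ') ∉ A}, ∀ τ, σ <+: τ →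
      τ ∈ {σ | ∀ τ', rs (σ ++ τ') ∉ A}) := by
  constructor
  · -- density
    intro σ
    by_contra hcon
    push_neg at hcon
    simp only [Set.mem_setOf_eq, not_forall, not_not] at hcon
    -- hcon : ∀ τ, σ <+: τ → ∃ τ', rs (τ ++ τ') ∈ A
    have key : ∀ τ : List ℕ, σ <+: τ → ∃ ρ, τ <+: ρ ∧ τ.length < ρ.length ∧ ρ ∈ A := by
      intro τ hτ
      obtain ⟨τ', hτ'⟩ := hcon (τ ++ [0]) (hτ.trans (List.prefix_append _ _))
      refine ⟨rs (τ ++ [0] ++ τ'), ?_, ?_, hτ'⟩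
      · rw [List.append_assoc]
        exact prefix_rs_append τ _ (by simp)
      · rw [length_rs _ (by simp)]
        simp
    -- build the sequence
    let f : ℕ → {t : List ℕ // σ <+: t} := fun n =>
      Nat.rec ⟨σ, List.prefix_rfl⟩
        (fun _ p => ⟨(key p.1 p.2).choose, p.2.trans (key p.1 p.2).choose_spec.1⟩) n
    have hstep : ∀ n, (f n).1 <+: (f (n+1)).1 ∧ (f n).1.length < (f (n+1)).1.length ∧
        (f (n+1)).1 ∈ A := fun n =>
      ⟨(key (f n).1 (f n).2).choose_spec.1, (key (f n).1 (f n).2).choose_spec.2.1,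
        (key (f n).1 (f n).2).choose_spec.2.2⟩
    have hmono : ∀ {m n}, m ≤ n → (f m).1 <+: (f n).1 := by
      intro m n h
      induction h with
      | refl => exact List.prefix_rfl
      | step h ih => exact ih.trans (hstep _).1
    have hlen : StrictMono fun n => (f n).1.length :=
      strictMono_nat_of_lt_succ fun n => (hstep n).2.1
    have hchain : IsChain (· <+: ·) (Set.range fun n => (f n).1) := by
      rintro _ ⟨m, rfl⟩ _ ⟨n, rfl⟩ _
      rcases le_total m n with h | h
      · exact Or.inl (hmono h)
      · exact Or.inr (hmono h)
    obtain ⟨b, hb, hsub⟩ := hchain.exists_maxChain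
    have hinf : (A ∩ b).Infinite := by
      apply Set.infinite_of_injective_forall_mem (f := fun n => (f (n+1)).1)
      case hi =>
        intro m n h
        have := congrArg List.length h
        exact Nat.succ_injective (hlen.injective this)
      case hf =>
        intro n
        exact ⟨(hstep n).2.2, hsub ⟨n+1, rfl⟩⟩
    exact hinf (hA b hb)
  · -- openness
    intro σ hσ τ hpre
    obtain ⟨δ, rfl⟩ := hpre
    intro τ' hmem
    rw [List.append_assoc] at hmem
    exact hσ (δ ++ τ') hmem
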